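/- arXiv:2106.03163 — 2 statements merged into one kernel-verified Lean document; each statement's English description precedes it below -/
import Mathlib

section
/- Let D ⊆ ℝ be nonempty with finite supremum s_D, let T : ℝⁿ → ℝ, x ∈ Dⁿ, and α ∈ (0,1). Let ℓ ∈ [0,1]ⁿ be such that P(U_{(i)} ≥ ℓ_{(i)} for all 1 ≤ i ≤ n) ≥ 1 − α, where U = (U_1,…,U_n) are i.i.d. Uniform(0,1) with order statistics U_{(1)} ≤ … ≤ U_{(n)}. Then b^α_{D,T}(x) ≤ b_{D,T}(x,ℓ). -/
open MeasureTheory Set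

/-- The sorted rearrangement (order statistics) of a finite real vector:
`sortedVec x i` is the (i+1)-st order statistic `x_{(i+1)}` (0-indexed). -/
noncomputable def sortedVec {n : ℕ} (x : Fin n → ℝ) : Fin n → ℝ :=
  x ∘ ⇑(Tuple.sort x)

/-- The induced mean `m(x, ℓ) = s - ∑ ℓ_{(i)} (x_{(i+1)} - x_{(i)})`, with `x_{(n+1)} := s`. -/
noncomputable def inducedMean {n : ℕ} (s : ℝ) (x ℓ : Fin n → ℝ) : ℝ :=
  s - ∑ i : Fin n, sortedVec ℓ i * ((Fin.snoc (sortedVec x) s : Fin (n+1) → ℝ) i.succ - sortedVec x i)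

/-- `S_{D,T}(x) = {y ∈ Dⁿ : T y ≤ T x}`. -/
def SsetD {n : ℕ} (D : Set ℝ) (T : (Fin n → ℝ) → ℝ) (x : Fin n → ℝ) : Set (Fin n → ℝ) :=
  {y | (∀ i, y i ∈ D) ∧ T y ≤ T x}

/-- `b_{D,T}(x, u) = sup_{z ∈ S_{D,T}(x)} m_{sup D}(z, u)`. -/
noncomputable def bfun {n : ℕ} (D : Set ℝ) (T : (Fin n → ℝ) → ℝ) (x u : Fin n → ℝ) : ℝ :=
  sSup ((fun z => inducedMean (sSup D) z u) '' SsetD D T x)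

/-- The uniform probability measure on `[0,1]`. -/
noncomputable def unif01 : Measure ℝ := volume.restrict (Icc (0:ℝ) 1)

/-- The law of an i.i.d. sample of size `n` from Uniform(0,1). -/
noncomputable def unifPi (n : ℕ) : Measure (Fin n → ℝ) := Measure.pi fun _ => unif01

/-- The `p`-quantile of the random variable `Y` under `μ`:
`Q(p, Y) = inf {y : P(Y ≤ y) ≥ p}`. -/
noncomputable def rquantile {Ω : Type*} [MeasurableSpace Ω] (μ : Measure Ω)
    (Y : Ω → ℝ) (p : ℝ) : ℝ :=
  sInf {y : ℝ | ENNReal.ofReal p ≤ μ {ω | Y ω ≤ y}}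

/-- The upper confidence bound `b^α_{D,T}(x) = Q(1 - α, b_{D,T}(x, U))`, `U` i.i.d. Uniform(0,1). -/
noncomputable def ucb {n : ℕ} (D : Set ℝ) (T : (Fin n → ℝ) → ℝ) (α : ℝ)
    (x : Fin n → ℝ) : ℝ :=
  rquantile (unifPi n) (bfun D T x) (1 - α)

/-- The stairstep function `G_{x,ℓ}` with top value at `s`. -/
noncomputable def stairstep {n : ℕ} (s : ℝ) (x ℓ : Fin n → ℝ) (t : ℝ) : ℝ :=
  if s ≤ t then 1 else sSup ({0} ∪ (sortedVec ℓ '' {i | sortedVec x i ≤ t}))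

/-- The `k`-th smallest value (1-indexed) among `m 0, …, m (L-1)`. -/
noncomputable def kthSmallest {L : ℕ} (m : Fin L → ℝ) (k : ℕ) : ℝ :=
  sInf {y : ℝ | k ≤ Nat.card {j : Fin L // m j ≤ y}}

instance : SigmaFinite unif01 := by
  unfold unif01; infer_instance

lemma gap_nonneg' {n : ℕ} (D : Set ℝ) (hbdd : BddAbove D)
    (z : Fin n → ℝ) (hz : ∀ i, z i ∈ D) (i : Fin n) :
    sortedVec z i ≤ (Fin.snoc (sortedVec z) (sSup D) : Fin (n+1) → ℝ) i.succ := by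
  rcases eq_or_lt_of_le (Nat.succ_le_of_lt i.isLt) with h | h
  · have hi : i.succ = Fin.last n := by
      ext; simp only [Fin.val_succ, Fin.val_last]; omega
    rw [hi, Fin.snoc_last]
    exact le_csSup hbdd (hz _)
  · have hi : i.succ = Fin.castSucc ⟨i.val + 1, h⟩ := by
      ext; simp
    rw [hi, Fin.snoc_castSucc]
    exact Tuple.monotone_sort z (by simp [Fin.le_def])

/-- if `ℓ ∈ [0,1]ⁿ` satisfies `P(∀ i, U_{(i)} ≥ ℓ_{(i)}) ≥ 1 - α`
for i.i.d. Uniform(0,1) order statistics, then `b^α_{D,T}(x) ≤ b_{D,T}(x,ℓ)`. -/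
theorem stmt3 {n : ℕ} (D : Set ℝ) (hD : D.Nonempty) (hbdd : BddAbove D)
    (T : (Fin n → ℝ) → ℝ) (x : Fin n → ℝ) (hx : ∀ i, x i ∈ D)
    (α : ℝ) (hα : α ∈ Set.Ioo (0:ℝ) 1)
    (ℓ : Fin n → ℝ) (hℓ : ∀ i, ℓ i ∈ Set.Icc (0:ℝ) 1)
    (hcov : ENNReal.ofReal (1 - α)
      ≤ unifPi n {u | ∀ i : Fin n, sortedVec ℓ i ≤ sortedVec u i}) :
    ucb D T α x ≤ bfun D T x ℓ := by
  set s := sSup D with hs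
  have hxS : x ∈ SsetD D T x := ⟨hx, le_refl _⟩
  have key_bdd : ∀ u : Fin n → ℝ, (∀ i, 0 ≤ sortedVec u i) →
      BddAbove ((fun z => inducedMean s z u) '' SsetD D T x) := by
    intro u hu
    refine ⟨s, ?_⟩
    rintro _ ⟨z, hz, rfl⟩
    have hsum : 0 ≤ ∑ i : Fin n, sortedVec u i *
        ((Fin.snoc (sortedVec z) s : Fin (n+1) → ℝ) i.succ - sortedVec z i) :=
      Finset.sum_nonneg fun i _ =>
        mul_nonneg (hu i) (sub_nonneg.mpr (gap_nonneg' D hbdd z hz.1 i))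
    simp only [inducedMean]
    linarith
  have himg_ne : ∀ u : Fin n → ℝ,
      ((fun z => inducedMean s z u) '' SsetD D T x).Nonempty :=
    fun u => ⟨_, x, hxS, rfl⟩
  have hℓ0 : ∀ i, 0 ≤ sortedVec ℓ i := fun i => (hℓ _).1
  have hbℓ := key_bdd ℓ hℓ0
  have hsub : {u : Fin n → ℝ | ∀ i, sortedVec ℓ i ≤ sortedVec u i}
      ⊆ {u | bfun D T x u ≤ bfun D T x ℓ} := by
    intro u hu
    have hu0 : ∀ i, 0 ≤ sortedVec u i := fun i => le_trans (hℓ0 i) (hu i)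
    refine csSup_le (himg_ne u) ?_
    rintro _ ⟨z, hz, rfl⟩
    have h1 : inducedMean s z u ≤ inducedMean s z ℓ := by
      simp only [inducedMean]
      refine sub_le_sub_left (Finset.sum_le_sum fun i _ => ?_) _
      exact mul_le_mul_of_nonneg_right (hu i)
        (sub_nonneg.mpr (gap_nonneg' D hbdd z hz.1 i))
    exact h1.trans (le_csSup hbℓ ⟨z, hz, rfl⟩)
  have hmem : ENNReal.ofReal (1 - α)
      ≤ unifPi n {u | bfun D T x u ≤ bfun D T x ℓ} :=
    le_trans hcov (measure_mono hsub)
  have hcube : unifPi n (Set.pi univ fun _ => Icc (0:ℝ) 1) = 1 := by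
    rw [unifPi, Measure.pi_pi]
    simp [unif01, Real.volume_Icc]
  have hcompl : unifPi n (Set.pi univ fun _ => Icc (0:ℝ) 1)ᶜ = 0 := by
    rw [measure_compl (MeasurableSet.univ_pi fun _ => measurableSet_Icc)
      (by rw [hcube]; exact ENNReal.one_ne_top), hcube]
    have huniv : unifPi n univ = 1 := by
      rw [unifPi, Measure.pi_univ]
      simp [unif01, Real.volume_Icc]
    rw [huniv, tsub_self]
  set c := s - ∑ i : Fin n,
    ((Fin.snoc (sortedVec x) s : Fin (n+1) → ℝ) i.succ - sortedVec x i) with hc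
  have hlb : ∀ u ∈ Set.pi univ fun _ => Icc (0:ℝ) 1, c ≤ bfun D T x u := by
    intro u hu
    have hu' : ∀ i, sortedVec u i ∈ Icc (0:ℝ) 1 := fun i => hu _ (mem_univ _)
    have h2 := le_csSup (key_bdd u fun i => (hu' i).1)
      (Set.mem_image_of_mem (fun z => inducedMean s z u) hxS)
    refine le_trans ?_ h2
    simp only [inducedMean, hc]
    refine sub_le_sub_left (Finset.sum_le_sum fun i _ => ?_) _
    have hg := sub_nonneg.mpr (gap_nonneg' D hbdd x hx i)
    nlinarith [(hu' i).1, (hu' i).2]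
  have hbb : BddBelow {y : ℝ |
      ENNReal.ofReal (1 - α) ≤ unifPi n {u | bfun D T x u ≤ y}} := by
    refine ⟨c, fun y hy => ?_⟩
    by_contra hlt
    push_neg at hlt
    have hsub2 : {u : Fin n → ℝ | bfun D T x u ≤ y}
        ⊆ (Set.pi univ fun _ => Icc (0:ℝ) 1)ᶜ := by
      intro u hu hmem'
      exact absurd (le_trans (hlb u hmem') hu) (not_le.mpr hlt)
    have hz : unifPi n {u | bfun D T x u ≤ y} = 0 :=
      le_antisymm (le_trans (measure_mono hsub2) hcompl.le) zero_le
    rw [Set.mem_setOf_eq, hz, nonpos_iff_eq_zero, ENNReal.ofReal_eq_zero] at hy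
    linarith [hα.2]
  exact csInf_le hbb hmem
end

section
/- Let D ⊆ ℝ be nonempty with finite supremum s_D, and let ν be a Borel probability measure supported on D with finite mean μ and CDF F. Let Z = (Z_1,…,Z_n) be i.i.d. with law ν, and let U = (U_1,…,U_n) be i.i.d. Uniform(0,1). Then for any function T : ℝⁿ → ℝ and any x ∈ Dⁿ: P(T(Z) ≤ T(x)) ≤ P(b_{D,T}(x,U) ≥ μ). -/
open MeasureTheory Set

open scoped ENNReal
set_option maxHeartbeats 1000000
set_option linter.unusedVariables false
set_option linter.unusedSectionVars false

section auxSorted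
lemma sortedVec_monotone {n : ℕ} (x : Fin n → ℝ) : Monotone (sortedVec x) :=
  Tuple.monotone_sort x

lemma sortedVec_comp {n : ℕ} {f : ℝ → ℝ} (hf : Monotone f) (z : Fin n → ℝ) :
    sortedVec (f ∘ z) = f ∘ sortedVec z := by
  have h1 : Monotone ((f ∘ z) ∘ ⇑(Tuple.sort z)) := by
    have := Tuple.monotone_sort z
    exact hf.comp this
  have := Tuple.unique_monotone (f := f ∘ z) (σ := Tuple.sort (f ∘ z)) (τ := Tuple.sort z)
    (Tuple.monotone_sort (f ∘ z)) h1
  simpa [sortedVec, Function.comp_assoc] using this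

lemma sortedVec_le {n : ℕ} {u v : Fin n → ℝ} (h : u ≤ v) : sortedVec u ≤ sortedVec v := by
  intro i
  set σ := Tuple.sort u with hσ
  set τ := Tuple.sort v with hτ
  have key : ∃ j, (∃ a, i ≤ a ∧ σ a = j) ∧ (∃ b, b ≤ i ∧ τ b = j) := by
    by_contra hcon
    set A : Finset (Fin n) := (Finset.Ici i).image σ
    set B : Finset (Fin n) := (Finset.Iic i).image τ
    have hAB : Disjoint A B := by
      rw [Finset.disjoint_left]
      intro j hjA hjB
      simp only [A, B, Finset.mem_image, Finset.mem_Ici, Finset.mem_Iic] at hjA hjB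
      obtain ⟨a, ha, rfl⟩ := hjA
      obtain ⟨b, hb, hba⟩ := hjB
      exact hcon ⟨σ a, ⟨a, ha, rfl⟩, ⟨b, hb, hba⟩⟩
    have hcard : A.card + B.card ≤ n := by
      have := Finset.card_union_of_disjoint hAB
      have h2 : (A ∪ B).card ≤ Fintype.card (Fin n) := Finset.card_le_univ _
      simp only [Fintype.card_fin] at h2
      omega
    have hA : A.card = n - i.val := by
      rw [Finset.card_image_of_injective _ σ.injective, Fin.card_Ici]
    have hB : B.card = i.val + 1 := by
      rw [Finset.card_image_of_injective _ τ.injective, Fin.card_Iic]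
    omega
  obtain ⟨j, ⟨a, ha, rfl⟩, ⟨b, hb, hba⟩⟩ := key
  have h1 : sortedVec u i ≤ u (σ a) := Tuple.monotone_sort u ha
  have h2 : v (τ b) ≤ sortedVec v i := Tuple.monotone_sort v hb
  calc sortedVec u i ≤ u (σ a) := h1
    _ ≤ v (σ a) := h _
    _ = v (τ b) := by rw [hba]
    _ ≤ sortedVec v i := h2

lemma sortedVec_add_const {n : ℕ} (v : Fin n → ℝ) (c : ℝ) :
    sortedVec (fun j => v j + c) = fun i => sortedVec v i + c := by
  have hf : Monotone (fun t : ℝ => t + c) := fun a b h => by simp only []; linarith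
  have := sortedVec_comp hf v
  simpa [Function.comp_def] using this

lemma sortedVec_dist_le {n : ℕ} (u v : Fin n → ℝ) (i : Fin n) :
    sortedVec u i - sortedVec v i ≤ dist u v := by
  have h : u ≤ fun j => v j + dist u v := by
    intro j
    have := dist_le_pi_dist u v j
    rw [Real.dist_eq] at this
    have h2 := le_trans (le_abs_self (u j - v j)) this
    simp only []
    linarith
  have h2 := sortedVec_le h i
  rw [sortedVec_add_const] at h2
  simp only [] at h2
  linarith

lemma continuous_sortedVec {n : ℕ} (i : Fin n) :
    Continuous (fun u : Fin n → ℝ => sortedVec u i) := by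
  have : LipschitzWith 1 (fun u : Fin n → ℝ => sortedVec u i) := by
    rw [lipschitzWith_iff_dist_le_mul]
    intro u v
    rw [Real.dist_eq, abs_sub_le_iff]
    norm_num
    constructor
    · linarith [sortedVec_dist_le u v i]
    · have := sortedVec_dist_le v u i
      rw [dist_comm] at this
      linarith
  exact this.continuous

lemma sortedVec_mem {n : ℕ} (x : Fin n → ℝ) (i : Fin n) : ∃ j, sortedVec x i = x j :=
  ⟨Tuple.sort x i, rfl⟩

lemma snoc_monotone {n : ℕ} {y : Fin n → ℝ} {s : ℝ} (hy : Monotone y) (hs : ∀ i, y i ≤ s) :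
    Monotone (Fin.snoc y s : Fin (n+1) → ℝ) := by
  intro a b hab
  rcases Fin.eq_castSucc_or_eq_last b with ⟨b', rfl⟩ | rfl
  · have ha : a < Fin.last n := lt_of_le_of_lt hab (Fin.castSucc_lt_last b')
    obtain ⟨a', rfl⟩ := Fin.exists_castSucc_eq.mpr ha.ne
    simp only [Fin.snoc_castSucc]
    exact hy (by rwa [Fin.castSucc_le_castSucc_iff] at hab)
  · rcases Fin.eq_castSucc_or_eq_last a with ⟨a', rfl⟩ | rfl
    · simp only [Fin.snoc_castSucc, Fin.snoc_last]
      exact hs a'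
    · simp

lemma gap_nonneg {n : ℕ} {x : Fin n → ℝ} {s : ℝ} (hxs : ∀ i, sortedVec x i ≤ s) (i : Fin n) :
    0 ≤ (Fin.snoc (sortedVec x) s : Fin (n+1) → ℝ) i.succ - sortedVec x i := by
  have hm := snoc_monotone (Tuple.monotone_sort x) hxs
  have : (Fin.snoc (sortedVec x) s : Fin (n+1) → ℝ) i.castSucc ≤ _ :=
    hm (Fin.castSucc_le_succ i)
  simpa [Fin.snoc_castSucc, sortedVec] using this

lemma inducedMean_le_top {n : ℕ} {s : ℝ} {x u : Fin n → ℝ} (hxs : ∀ i, sortedVec x i ≤ s)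
    (hu : ∀ i, 0 ≤ u i) : inducedMean s x u ≤ s := by
  have : 0 ≤ ∑ i : Fin n, sortedVec u i * ((Fin.snoc (sortedVec x) s : Fin (n+1) → ℝ) i.succ - sortedVec x i) := by
    apply Finset.sum_nonneg
    intro i _
    have h1 : 0 ≤ sortedVec u i := by
      obtain ⟨j, hj⟩ := sortedVec_mem u i
      rw [hj]; exact hu j
    exact mul_nonneg h1 (gap_nonneg hxs i)
  simp only [inducedMean]
  linarith

lemma inducedMean_anti {n : ℕ} {s : ℝ} {x u v : Fin n → ℝ} (hxs : ∀ i, sortedVec x i ≤ s)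
    (huv : u ≤ v) : inducedMean s x v ≤ inducedMean s x u := by
  simp only [inducedMean]
  have : ∑ i : Fin n, sortedVec u i * ((Fin.snoc (sortedVec x) s : Fin (n+1) → ℝ) i.succ - sortedVec x i)
      ≤ ∑ i : Fin n, sortedVec v i * ((Fin.snoc (sortedVec x) s : Fin (n+1) → ℝ) i.succ - sortedVec x i) := by
    apply Finset.sum_le_sum
    intro i _
    exact mul_le_mul_of_nonneg_right (sortedVec_le huv i) (gap_nonneg hxs i)
  linarith

end auxSorted

noncomputable def Fcdf (ν : Measure ℝ) (t : ℝ) : ℝ := (ν (Iic t)).toReal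
noncomputable def Qf (ν : Measure ℝ) (p : ℝ) : ℝ := sInf {t | p ≤ Fcdf ν t}
noncomputable def Qc (ν : Measure ℝ) (p : ℝ) : ℝ := if 0 < p ∧ p ≤ 1 then Qf ν p else Qf ν 1

section q
variable {ν : Measure ℝ} [IsProbabilityMeasure ν] {s : ℝ} (hs1 : ν (Iic s) = 1)

lemma Fcdf_mono : Monotone (Fcdf ν) := fun a b hab =>
  ENNReal.toReal_mono (measure_ne_top ν _) (measure_mono (Iic_subset_Iic.mpr hab))

lemma Fcdf_nonneg (t : ℝ) : 0 ≤ Fcdf ν t := ENNReal.toReal_nonneg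

lemma Fcdf_le_one (t : ℝ) : Fcdf ν t ≤ 1 := by
  have := prob_le_one (μ := ν) (s := Iic t)
  simpa [Fcdf] using ENNReal.toReal_mono (by simp) this

lemma ofReal_le_iff_le_Fcdf {p t : ℝ} (hp : 0 ≤ p) :
    p ≤ Fcdf ν t ↔ ENNReal.ofReal p ≤ ν (Iic t) := by
  rw [Fcdf, ← ENNReal.ofReal_le_iff_le_toReal (measure_ne_top ν _)]

include hs1 in
lemma QfS_nonempty {p : ℝ} (hp : p ≤ 1) : {t | p ≤ Fcdf ν t}.Nonempty := by
  refine ⟨s, ?_⟩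
  simp only [mem_setOf_eq, Fcdf, hs1]
  simpa using hp

lemma QfS_bddBelow {p : ℝ} (hp : 0 < p) : BddBelow {t | p ≤ Fcdf ν t} := by
  by_contra hb
  have hten : Filter.Tendsto (fun m : ℕ => ν (Iic (-(m:ℝ)))) Filter.atTop (nhds (ν (⋂ m : ℕ, Iic (-(m:ℝ))))) := by
    apply tendsto_measure_iInter_atTop
    · exact fun m => measurableSet_Iic.nullMeasurableSet
    · intro a b hab
      exact Iic_subset_Iic.mpr (by simp; exact_mod_cast hab)
    · exact ⟨0, measure_ne_top ν _⟩
  have hempty : (⋂ m : ℕ, Iic (-(m:ℝ))) = ∅ := by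
    ext t
    simp only [mem_iInter, mem_Iic, mem_empty_iff_false, iff_false]
    push_neg
    obtain ⟨m, hm⟩ := exists_nat_gt (-t)
    exact ⟨m, by linarith⟩
  rw [hempty, measure_empty] at hten
  have hlb : ∀ m : ℕ, ENNReal.ofReal p ≤ ν (Iic (-(m:ℝ))) := by
    intro m
    rw [not_bddBelow_iff] at hb
    obtain ⟨t, ht, htm⟩ := hb (-(m:ℝ))
    calc ENNReal.ofReal p ≤ ν (Iic t) := (ofReal_le_iff_le_Fcdf hp.le).mp ht
      _ ≤ ν (Iic (-(m:ℝ))) := measure_mono (Iic_subset_Iic.mpr htm.le)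
  have := ge_of_tendsto hten (Filter.Eventually.of_forall hlb)
  simp only [le_zero_iff, ENNReal.ofReal_eq_zero] at this
  linarith

include hs1 in
lemma le_Fcdf_Qf {p : ℝ} (hp : 0 < p) (hp1 : p ≤ 1) : p ≤ Fcdf ν (Qf ν p) := by
  rw [ofReal_le_iff_le_Fcdf hp.le]
  have hiic : Iic (Qf ν p) = ⋂ k : ℕ, Iic (Qf ν p + 1/(k+1)) := by
    ext t
    simp only [mem_Iic, mem_iInter]
    constructor
    · intro h k
      have : (0:ℝ) < 1/(k+1) := by positivity
      linarith
    · intro h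
      by_contra hc
      push_neg at hc
      obtain ⟨k, hk⟩ := exists_nat_one_div_lt (show (0:ℝ) < t - Qf ν p by linarith)
      have := h k
      linarith
  have hten : Filter.Tendsto (fun k : ℕ => ν (Iic (Qf ν p + 1/(k+1)))) Filter.atTop
      (nhds (ν (⋂ k : ℕ, Iic (Qf ν p + 1/(k+1))))) := by
    apply tendsto_measure_iInter_atTop
    · exact fun m => measurableSet_Iic.nullMeasurableSet
    · intro a b hab
      apply Iic_subset_Iic.mpr
      have : (1:ℝ)/(b+1) ≤ 1/(a+1) := by
        apply one_div_le_one_div_of_le (by positivity)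
        exact_mod_cast by omega
      linarith
    · exact ⟨0, measure_ne_top ν _⟩
  rw [hiic]
  refine ge_of_tendsto hten (Filter.Eventually.of_forall fun k => ?_)
  have hlt : Qf ν p < Qf ν p + 1/(k+1) := by
    have : (0:ℝ) < 1/(k+1) := by positivity
    linarith
  obtain ⟨t, ht, htlt⟩ := exists_lt_of_csInf_lt (QfS_nonempty hs1 hp1) hlt
  calc ENNReal.ofReal p ≤ ν (Iic t) := (ofReal_le_iff_le_Fcdf hp.le).mp ht
    _ ≤ _ := measure_mono (Iic_subset_Iic.mpr htlt.le)

include hs1 in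
lemma Qf_le_iff {p a : ℝ} (hp : 0 < p) (hp1 : p ≤ 1) : Qf ν p ≤ a ↔ p ≤ Fcdf ν a := by
  constructor
  · intro h
    exact le_trans (le_Fcdf_Qf hs1 hp hp1) (Fcdf_mono h)
  · intro h
    exact csInf_le (QfS_bddBelow hp) h


include hs1 in
lemma Qc_preimage_Iic (a : ℝ) :
    Qc ν ⁻¹' (Iic a) = (Ioc 0 1 ∩ Iic (Fcdf ν a)) ∪ ((Ioc (0:ℝ) 1)ᶜ ∩ {p : ℝ | Qf ν 1 ≤ a}) := by
  ext p
  simp only [mem_preimage, mem_Iic, Qc, mem_union, mem_inter_iff, mem_Ioc, mem_compl_iff,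
    mem_setOf_eq]
  by_cases hp : 0 < p ∧ p ≤ 1
  · rw [if_pos hp, Qf_le_iff hs1 hp.1 hp.2]
    tauto
  · rw [if_neg hp]
    tauto

include hs1 in
lemma Qc_measurable : Measurable (Qc ν) := by
  apply measurable_of_Iic
  intro a
  rw [Qc_preimage_Iic hs1]
  refine ((measurableSet_Ioc.inter measurableSet_Iic).union
    (measurableSet_Ioc.compl.inter ?_))
  by_cases h : Qf ν 1 ≤ a
  · simp [h]
  · simp [h]

include hs1 in
lemma Qc_map_eq : Measure.map (Qc ν) unif01 = ν := by
  have hprob : IsProbabilityMeasure unif01 := by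
    constructor
    simp [unif01, Real.volume_Icc]
  have : IsProbabilityMeasure (Measure.map (Qc ν) unif01) :=
    Measure.isProbabilityMeasure_map (Qc_measurable hs1).aemeasurable
  refine Measure.ext_of_Iic _ _ fun a => ?_
  rw [Measure.map_apply (Qc_measurable hs1) measurableSet_Iic, Qc_preimage_Iic hs1]
  have hmeas1 : unif01 ((Ioc (0:ℝ) 1)ᶜ ∩ {p : ℝ | Qf ν 1 ≤ a}) = 0 := by
    have hsub : (Ioc (0:ℝ) 1)ᶜ ∩ {p : ℝ | Qf ν 1 ≤ a} ∩ Icc (0:ℝ) 1 ⊆ {(0:ℝ)} := by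
      intro p hp
      obtain ⟨⟨hpc, _⟩, hpi⟩ := hp
      simp only [mem_compl_iff, mem_Ioc, not_and, not_le] at hpc
      simp only [mem_Icc] at hpi
      simp only [mem_singleton_iff]
      rcases lt_or_eq_of_le hpi.1 with h0 | h0
      · exact absurd (hpc h0) (not_lt.mpr hpi.2)
      · exact h0.symm
    have hle : unif01 ((Ioc (0:ℝ) 1)ᶜ ∩ {p : ℝ | Qf ν 1 ≤ a}) ≤ volume {(0:ℝ)} := by
      rw [unif01, Measure.restrict_apply' measurableSet_Icc]
      exact measure_mono hsub
    exact le_antisymm (hle.trans (by simp)) zero_le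
  have hub : unif01 (Ioc 0 1 ∩ Iic (Fcdf ν a) ∪ (Ioc (0:ℝ) 1)ᶜ ∩ {p : ℝ | Qf ν 1 ≤ a})
      = unif01 (Ioc 0 1 ∩ Iic (Fcdf ν a)) :=
    le_antisymm ((measure_union_le _ _).trans (by rw [hmeas1, add_zero]))
      (measure_mono subset_union_left)
  rw [hub]
  have hF0 : 0 ≤ Fcdf ν a := Fcdf_nonneg a
  have hF1 : Fcdf ν a ≤ 1 := Fcdf_le_one a
  have : Ioc 0 1 ∩ Iic (Fcdf ν a) = Ioc 0 (Fcdf ν a) := by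
    ext p
    simp only [mem_inter_iff, mem_Ioc, mem_Iic]
    constructor
    · rintro ⟨⟨h1, _⟩, h3⟩; exact ⟨h1, h3⟩
    · rintro ⟨h1, h2⟩; exact ⟨⟨h1, h2.trans hF1⟩, h2⟩
  rw [this, unif01, Measure.restrict_apply' measurableSet_Icc]
  have hss : Ioc 0 (Fcdf ν a) ∩ Icc 0 1 = Ioc 0 (Fcdf ν a) := by
    apply inter_eq_left.mpr
    intro p hp
    simp only [mem_Ioc] at hp
    exact ⟨hp.1.le, hp.2.trans hF1⟩
  rw [hss, Real.volume_Ioc]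
  simp only [Fcdf]
  rw [sub_zero, ENNReal.ofReal_toReal (measure_ne_top ν _)]

end q


lemma key_ineq {n : ℕ} (D : Set ℝ) (hbdd : BddAbove D)
    (ν : Measure ℝ) [IsProbabilityMeasure ν] (hsupp : ∀ᵐ t ∂ν, t ∈ D)
    (hint : Integrable id ν)
    (z : Fin n → ℝ) (hz : ∀ i, z i ∈ D) :
    ∫ t, t ∂ν ≤ inducedMean (sSup D) z (Fcdf ν ∘ z) := by
  set s := sSup D with hs
  set μ := ∫ t, t ∂ν with hμ
  set y := sortedVec z with hy
  set w : Fin (n+1) → ℝ := Fin.snoc y s with hw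
  have hyD : ∀ i, y i ∈ D := fun i => hz (Tuple.sort z i)
  have hys : ∀ i, y i ≤ s := fun i => le_csSup hbdd (hyD i)
  have hymono : Monotone y := Tuple.monotone_sort z
  have hwmono : Monotone w := snoc_monotone hymono hys
  have hws : ∀ j, w j ≤ s := fun j => by
    have := hwmono (Fin.le_last j)
    simpa [hw, Fin.snoc_last] using this
  have hcast : ∀ i : Fin n, w i.castSucc = y i := fun i => by simp [hw, Fin.snoc_castSucc]
  have hgap : ∀ i : Fin n, y i ≤ w i.succ := fun i => by
    rw [← hcast i]; exact hwmono (Fin.castSucc_le_succ i)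
  have hsort : sortedVec (Fcdf ν ∘ z) = Fcdf ν ∘ y := sortedVec_comp (Fcdf_mono (ν := ν)) z
  have hexp : inducedMean s z (Fcdf ν ∘ z)
      = s - ∑ i : Fin n, Fcdf ν (y i) * (w i.succ - y i) := by
    simp only [inducedMean, hsort]
    rfl
  rw [hexp]
  have hμs : μ ≤ s := by
    rw [hμ]
    calc ∫ t, t ∂ν ≤ ∫ _, s ∂ν := by
          apply integral_mono_ae hint (integrable_const s)
          exact hsupp.mono fun t ht => le_csSup hbdd ht
      _ = s := by simp
  have hsm_int : Integrable (fun t => s - t) ν := (integrable_const s).sub hint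
  have hsm_nn : 0 ≤ᵐ[ν] fun t => s - t :=
    hsupp.mono fun t ht => by simp; exact le_csSup hbdd ht
  have hlayer : ENNReal.ofReal (s - μ) = ∫⁻ r in Ioi (0:ℝ), ν {a | r < s - a} := by
    have h1 : ENNReal.ofReal (∫ t, (s - t) ∂ν) = ∫⁻ t, ENNReal.ofReal (s - t) ∂ν :=
      ofReal_integral_eq_lintegral_ofReal hsm_int hsm_nn
    have h2 : ∫ t, (s - t) ∂ν = s - μ := by
      have h := integral_sub (integrable_const (μ := ν) s) hint
      simp only [id_eq] at h
      rw [h, integral_const]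
      simp [hμ]
    have h3 := lintegral_eq_lintegral_meas_lt ν hsm_nn hsm_int.aemeasurable
    rw [← h2, h1, h3]
  set I : Fin n → Set ℝ := fun i => Ioo (s - w i.succ) (s - y i) with hI
  have hvol : ∀ i, volume (I i) = ENNReal.ofReal (w i.succ - y i) := by
    intro i
    rw [hI]
    simp only [Real.volume_Ioo]
    ring_nf
  have hIsub : ∀ i, I i ⊆ Ioi (0:ℝ) := by
    intro i r hr
    simp only [hI, mem_Ioo] at hr
    have := hws i.succ
    simp only [mem_Ioi]
    linarith [hr.1]
  have hdisj' : ∀ i j : Fin n, i < j → Disjoint (I i) (I j) := by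
    intro i j hlt
    rw [Set.disjoint_left]
    intro r hri hrj
    simp only [hI, mem_Ioo] at hri hrj
    have hle : w i.succ ≤ w j.castSucc := hwmono (by
      rw [Fin.succ_le_castSucc_iff]; exact hlt)
    rw [hcast j] at hle
    linarith [hri.1, hrj.2]
  have hIdisj : Pairwise (Function.onFun Disjoint I) := by
    intro i j hij
    rcases hij.lt_or_gt with h | h
    · exact hdisj' i j h
    · exact (hdisj' j i h).symm
  have hmeasg : Measurable (fun r : ℝ => ν (Iio (s - r))) := by
    have hm : Monotone (fun t : ℝ => ν (Iio t)) := fun a b hab => measure_mono (Iio_subset_Iio hab)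
    exact hm.measurable.comp (measurable_const.sub measurable_id)
  have hterm : ∀ i : Fin n,
      ENNReal.ofReal (Fcdf ν (y i) * (w i.succ - y i)) ≤ ∫⁻ r in I i, ν (Iio (s - r)) := by
    intro i
    rw [ENNReal.ofReal_mul (Fcdf_nonneg (y i))]
    have hF : ENNReal.ofReal (Fcdf ν (y i)) = ν (Iic (y i)) := by
      rw [Fcdf, ENNReal.ofReal_toReal (measure_ne_top ν _)]
    rw [hF, ← hvol i, ← setLIntegral_const (I i) (ν (Iic (y i)))]
    apply setLIntegral_mono hmeasg
    intro r hr
    simp only [hI, mem_Ioo] at hr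
    apply measure_mono
    intro a ha
    simp only [mem_Iic] at ha
    simp only [mem_Iio]
    linarith [hr.2]
  have hsum : ∑ i : Fin n, ∫⁻ r in I i, ν (Iio (s - r)) ≤ ENNReal.ofReal (s - μ) := by
    rw [hlayer]
    have hmeasI : ∀ i, MeasurableSet (I i) := fun i => measurableSet_Ioo
    have := lintegral_iUnion hmeasI hIdisj (fun r => ν (Iio (s - r))) (μ := volume)
    rw [← tsum_fintype (L := SummationFilter.unconditional _)] at *
    calc ∑' i : Fin n, ∫⁻ r in I i, ν (Iio (s - r))
        = ∫⁻ r in ⋃ i, I i, ν (Iio (s - r)) := this.symm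
      _ ≤ ∫⁻ r in Ioi (0:ℝ), ν (Iio (s - r)) := lintegral_mono_set (iUnion_subset hIsub)
      _ = ∫⁻ r in Ioi (0:ℝ), ν {a | r < s - a} := by
          apply lintegral_congr
          intro r
          congr 1
          ext a
          simp only [mem_Iio, mem_setOf_eq]
          constructor <;> intro <;> linarith
  have hfinal : ENNReal.ofReal (∑ i : Fin n, Fcdf ν (y i) * (w i.succ - y i))
      ≤ ENNReal.ofReal (s - μ) := by
    rw [ENNReal.ofReal_sum_of_nonneg (fun i _ =>
      mul_nonneg (Fcdf_nonneg (y i)) (by linarith [hgap i]))]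
    exact le_trans (Finset.sum_le_sum fun i _ => hterm i) hsum
  have hreal : ∑ i : Fin n, Fcdf ν (y i) * (w i.succ - y i) ≤ s - μ := by
    rwa [ENNReal.ofReal_le_ofReal_iff (by linarith)] at hfinal
  linarith


section b
variable {n : ℕ} (D : Set ℝ) (T : (Fin n → ℝ) → ℝ) (x : Fin n → ℝ)
  (hbdd : BddAbove D) (hx : ∀ i, x i ∈ D)

include hbdd in
lemma sorted_le_sSup {z : Fin n → ℝ} (hz : ∀ i, z i ∈ D) (i : Fin n) :
    sortedVec z i ≤ sSup D := by
  obtain ⟨j, hj⟩ := sortedVec_mem z i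
  rw [hj]
  exact le_csSup hbdd (hz j)

include hx in
lemma x_mem_SsetD : x ∈ SsetD D T x := ⟨hx, le_refl _⟩

include hbdd in
lemma bfun_bddAbove {u : Fin n → ℝ} (hu : ∀ i, 0 ≤ u i) :
    BddAbove ((fun z => inducedMean (sSup D) z u) '' SsetD D T x) := by
  refine ⟨sSup D, fun a ha => ?_⟩
  obtain ⟨z, hz, rfl⟩ := ha
  exact inducedMean_le_top (sorted_le_sSup D hbdd hz.1) hu

include hbdd in
lemma bfun_ge {u z : Fin n → ℝ} (hu : ∀ i, 0 ≤ u i) (hz : z ∈ SsetD D T x) :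
    inducedMean (sSup D) z u ≤ bfun D T x u :=
  le_csSup (bfun_bddAbove D T x hbdd hu) (mem_image_of_mem _ hz)

include hbdd hx in
lemma bfun_anti {u v : Fin n → ℝ} (hu : ∀ i, 0 ≤ u i) (huv : u ≤ v) :
    bfun D T x v ≤ bfun D T x u := by
  apply csSup_le (by exact ⟨_, mem_image_of_mem _ (x_mem_SsetD D T x hx)⟩)
  rintro a ⟨z, hz, rfl⟩
  calc inducedMean (sSup D) z v ≤ inducedMean (sSup D) z u :=
        inducedMean_anti (sorted_le_sSup D hbdd hz.1) huv
    _ ≤ bfun D T x u := bfun_ge D T x hbdd hu hz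

lemma continuous_inducedMean (s : ℝ) (z : Fin n → ℝ) :
    Continuous (fun u : Fin n → ℝ => inducedMean s z u) := by
  simp only [inducedMean]
  apply continuous_const.sub
  apply continuous_finset_sum
  intro i _
  exact (continuous_sortedVec i).mul continuous_const

include hbdd hx in
lemma measE (μc : ℝ) :
    MeasurableSet {u : Fin n → ℝ | (∀ i, u i ∈ Icc (0:ℝ) 1) ∧ μc ≤ bfun D T x u} := by
  set s := sSup D
  have hEeq : {u : Fin n → ℝ | (∀ i, u i ∈ Icc (0:ℝ) 1) ∧ μc ≤ bfun D T x u}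
      = {u : Fin n → ℝ | ∀ i, u i ∈ Icc (0:ℝ) 1} ∩
        ⋂ k : ℕ, ⋃ z : SsetD D T x, {u | μc - 1/(k+1) < inducedMean s (z : Fin n → ℝ) u} := by
    ext u
    simp only [mem_setOf_eq, mem_inter_iff, mem_iInter, mem_iUnion, Subtype.exists]
    constructor
    · rintro ⟨hbox, hle⟩
      refine ⟨hbox, fun k => ?_⟩
      have hne : ((fun z => inducedMean s z u) '' SsetD D T x).Nonempty :=
        ⟨_, mem_image_of_mem _ (x_mem_SsetD D T x hx)⟩
      have hlt : μc - 1/(k+1 : ℝ) < bfun D T x u := by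
        have : (0:ℝ) < 1/(k+1) := by positivity
        linarith
      obtain ⟨a, ha, hlta⟩ := exists_lt_of_lt_csSup hne hlt
      obtain ⟨z, hz, rfl⟩ := ha
      exact ⟨z, hz, hlta⟩
    · rintro ⟨hbox, hall⟩
      refine ⟨hbox, ?_⟩
      have hu0 : ∀ i, 0 ≤ u i := fun i => (hbox i).1
      by_contra hc
      push_neg at hc
      obtain ⟨k, hk⟩ := exists_nat_one_div_lt (show (0:ℝ) < μc - bfun D T x u by linarith)
      obtain ⟨z, hz, hlt⟩ := hall k
      have := bfun_ge D T x hbdd hu0 hz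
      linarith
  rw [hEeq]
  apply MeasurableSet.inter
  · have : {u : Fin n → ℝ | ∀ i, u i ∈ Icc (0:ℝ) 1} = ⋂ i, (fun u : Fin n → ℝ => u i) ⁻¹' Icc 0 1 := by
      ext u; simp
    rw [this]
    exact MeasurableSet.iInter fun i => (measurable_pi_apply i) measurableSet_Icc
  · apply MeasurableSet.iInter
    intro k
    refine IsOpen.measurableSet ?_
    apply isOpen_iUnion
    intro z
    have hc : Continuous fun u : Fin n → ℝ => inducedMean s (z : Fin n → ℝ) u :=
      continuous_inducedMean s (z : Fin n → ℝ)
    have hcc : Continuous fun _ : Fin n → ℝ => μc - 1/(k+1:ℝ) := continuous_const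
    exact isOpen_lt hcc hc

end b


/-- `P(T(Z) ≤ T(x)) ≤ P(b_{D,T}(x,U) ≥ μ)` for `Z` an i.i.d. sample
from a distribution `ν` supported on `D` with mean `μ`, and `U` i.i.d. Uniform(0,1). -/
theorem stmt4 {n : ℕ} (D : Set ℝ) (hD : D.Nonempty) (hbdd : BddAbove D)
    (ν : Measure ℝ) [IsProbabilityMeasure ν] (hsupp : ∀ᵐ t ∂ν, t ∈ D)
    (hint : Integrable id ν) (μmean : ℝ) (hmean : μmean = ∫ t, t ∂ν)
    (T : (Fin n → ℝ) → ℝ) (x : Fin n → ℝ) (hx : ∀ i, x i ∈ D) :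
    (Measure.pi fun _ : Fin n => ν) {z | T z ≤ T x}
      ≤ unifPi n {u | μmean ≤ bfun D T x u} := by
  have hprob : IsProbabilityMeasure unif01 := ⟨by simp [unif01, Real.volume_Icc]⟩
  set s := sSup D with hsdef
  -- ν (Iic s) = 1
  have hnullD : ν {t : ℝ | ¬ t ∈ D} = 0 := ae_iff.mp hsupp
  have hs1 : ν (Iic s) = 1 := by
    refine le_antisymm prob_le_one ?_
    have hsub : (univ : Set ℝ) ⊆ Iic s ∪ {t : ℝ | ¬ t ∈ D} := by
      intro t _
      by_cases ht : t ∈ D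
      · exact Or.inl (le_csSup hbdd ht)
      · exact Or.inr ht
    calc (1:ℝ≥0∞) = ν univ := (measure_univ).symm
      _ ≤ ν (Iic s) + ν {t : ℝ | ¬ t ∈ D} := (measure_mono hsub).trans (measure_union_le _ _)
      _ = ν (Iic s) := by rw [hnullD, add_zero]
  -- the maps
  set Φ : (Fin n → ℝ) → (Fin n → ℝ) := fun u i => Qc ν (u i) with hΦ
  set Ψ : (Fin n → ℝ) → (Fin n → ℝ) := fun z i => Fcdf ν (z i) with hΨ
  have hΨmeas : Measurable Ψ := by
    apply measurable_pi_lambda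
    intro i
    have hm : Monotone (Fcdf ν) := fun a b hab =>
      ENNReal.toReal_mono (measure_ne_top ν _) (measure_mono (Iic_subset_Iic.mpr hab))
    exact hm.measurable.comp (measurable_pi_apply i)
  have hMP : MeasurePreserving Φ (unifPi n) (Measure.pi fun _ : Fin n => ν) :=
    measurePreserving_pi (fun _ => unif01) (fun _ => ν)
      (fun _ => ⟨Qc_measurable hs1, Qc_map_eq hs1⟩)
  -- the measurable core set
  set E : Set (Fin n → ℝ) := {u | (∀ i, u i ∈ Icc (0:ℝ) 1) ∧ μmean ≤ bfun D T x u} with hE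
  have hEmeas : MeasurableSet E := measE D T x hbdd hx μmean
  set Sstar : Set (Fin n → ℝ) := Ψ ⁻¹' E with hSstar
  have hSmeas : MeasurableSet Sstar := hΨmeas hEmeas
  set N : Set ℝ := toMeasurable ν {t : ℝ | ¬ t ∈ D} with hN
  have hNnull : ν N = 0 := by rw [hN, measure_toMeasurable]; exact hnullD
  -- step 1
  have step1 : {z : Fin n → ℝ | T z ≤ T x} ⊆ Sstar ∪ ⋃ i, Function.eval i ⁻¹' N := by
    intro z hz
    by_cases hzD : ∀ i, z i ∈ D
    · left
      have hzS : z ∈ SsetD D T x := ⟨hzD, hz⟩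
      refine ⟨fun i => ⟨Fcdf_nonneg _, Fcdf_le_one _⟩, ?_⟩
      have hk := key_ineq D hbdd ν hsupp hint z hzD
      rw [← hmean] at hk
      refine hk.trans ?_
      exact bfun_ge D T x hbdd (fun i => Fcdf_nonneg _) hzS
    · right
      push_neg at hzD
      obtain ⟨i, hi⟩ := hzD
      exact mem_iUnion.mpr ⟨i, subset_toMeasurable ν _ hi⟩
  have hUnull : (Measure.pi fun _ : Fin n => ν) (⋃ i, Function.eval i ⁻¹' N) = 0 :=
    measure_iUnion_null fun i => Measure.pi_eval_preimage_null _ hNnull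
  have step2 : (Measure.pi fun _ : Fin n => ν) {z | T z ≤ T x}
      ≤ (Measure.pi fun _ : Fin n => ν) Sstar := by
    calc (Measure.pi fun _ : Fin n => ν) {z | T z ≤ T x}
        ≤ (Measure.pi fun _ : Fin n => ν) (Sstar ∪ ⋃ i, Function.eval i ⁻¹' N) :=
          measure_mono step1
      _ ≤ (Measure.pi fun _ : Fin n => ν) Sstar
          + (Measure.pi fun _ : Fin n => ν) (⋃ i, Function.eval i ⁻¹' N) :=
          measure_union_le _ _
      _ = (Measure.pi fun _ : Fin n => ν) Sstar := by rw [hUnull, add_zero]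
  have step3 : (Measure.pi fun _ : Fin n => ν) Sstar = unifPi n (Φ ⁻¹' Sstar) :=
    (hMP.measure_preimage hSmeas.nullMeasurableSet).symm
  set G : Set (Fin n → ℝ) := {u | ∀ i, u i ∈ Ioo (0:ℝ) 1} with hG
  have hGcnull : unifPi n Gᶜ = 0 := by
    have hGc : Gᶜ ⊆ ⋃ i, Function.eval i ⁻¹' (Ioo (0:ℝ) 1)ᶜ := by
      intro u hu
      simp only [hG, mem_compl_iff, mem_setOf_eq, not_forall] at hu
      obtain ⟨i, hi⟩ := hu
      exact mem_iUnion.mpr ⟨i, hi⟩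
    refine measure_mono_null hGc (measure_iUnion_null fun i =>
      Measure.pi_eval_preimage_null _ ?_)
    have : unif01 (Ioo (0:ℝ) 1)ᶜ ≤ volume ({0, 1} : Set ℝ) := by
      rw [unif01, Measure.restrict_apply' measurableSet_Icc]
      apply measure_mono
      intro p hp
      obtain ⟨hp1, hp2⟩ := hp
      simp only [mem_compl_iff, mem_Ioo, not_and, not_lt] at hp1
      simp only [mem_Icc] at hp2
      rcases eq_or_lt_of_le hp2.1 with h0 | h0
      · exact Or.inl h0.symm
      · exact Or.inr (le_antisymm hp2.2 (hp1 h0))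
    refine le_antisymm (this.trans ?_) zero_le
    exact le_of_eq ((Set.Finite.insert (0:ℝ) (Set.finite_singleton (1:ℝ))).measure_zero volume)
  have step4 : unifPi n (Φ ⁻¹' Sstar) ≤ unifPi n (Φ ⁻¹' Sstar ∩ G) := by
    calc unifPi n (Φ ⁻¹' Sstar) ≤ unifPi n ((Φ ⁻¹' Sstar ∩ G) ∪ Gᶜ) :=
        measure_mono (fun u hu => by
          by_cases hg : u ∈ G
          · exact Or.inl ⟨hu, hg⟩
          · exact Or.inr hg)
      _ ≤ unifPi n (Φ ⁻¹' Sstar ∩ G) + unifPi n Gᶜ := measure_union_le _ _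
      _ = unifPi n (Φ ⁻¹' Sstar ∩ G) := by rw [hGcnull, add_zero]
  have step5 : Φ ⁻¹' Sstar ∩ G ⊆ {u | μmean ≤ bfun D T x u} := by
    rintro u ⟨huS, huG⟩
    have huG' : ∀ i, u i ∈ Ioo (0:ℝ) 1 := huG
    have hu0 : ∀ i, 0 ≤ u i := fun i => (huG' i).1.le
    have hv : μmean ≤ bfun D T x (fun i => Fcdf ν (Qc ν (u i))) := by
      have := (mem_preimage.mp huS : Ψ (Φ u) ∈ E)
      exact this.2
    have huv : u ≤ fun i => Fcdf ν (Qc ν (u i)) := by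
      intro i
      have hcond : 0 < u i ∧ u i ≤ 1 := ⟨(huG' i).1, (huG' i).2.le⟩
      have hq : Qc ν (u i) = Qf ν (u i) := if_pos hcond
      show u i ≤ Fcdf ν (Qc ν (u i))
      rw [hq]
      exact le_Fcdf_Qf hs1 hcond.1 hcond.2
    have := bfun_anti D T x hbdd hx hu0 huv
    exact le_trans hv this
  calc (Measure.pi fun _ : Fin n => ν) {z | T z ≤ T x}
      ≤ (Measure.pi fun _ : Fin n => ν) Sstar := step2
    _ = unifPi n (Φ ⁻¹' Sstar) := step3
    _ ≤ unifPi n (Φ ⁻¹' Sstar ∩ G) := step4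
    _ ≤ unifPi n {u | μmean ≤ bfun D T x u} := measure_mono step5
end
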